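/- Let A = (Q, i, ·) be a finite deterministic A-automaton whose start state i is not reachable from any other state. Define the R-expansion A^∧R: states are strict reachability chains (i >_R q₁ >_R … >_R q_k) reachable from (i), with transition by appending q_k·a if q_k >_R q_k·a, or replacing q_k by q_k·a if q_k ≡_R q_k·a. Then the canonical map η sending a chain to its last entry is a surjective automaton morphism A^∧R → A that is injective on every mutual-reachability class of A^∧R. -/
import Mathlib


/-- Run an automaton from state `q` along word `w`. -/
def run {Q A : Type*} (step : Q → A → Q) (q : Q) (w : List A) : Q := w.foldl step q

/-- `q` is reachable from `p`. -/
def reaches {Q A : Type*} (step : Q → A → Q) (p q : Q) : Prop :=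
  ∃ w : List A, run step p w = q

/-- Mutual reachability (the automaton ≡_R relation). -/
def equivReach {Q A : Type*} (step : Q → A → Q) (p q : Q) : Prop :=
  reaches step p q ∧ reaches step q p

open Classical in
/-- Transition function of the R-expansion `A^∧R`: states are (reversed) strict
reachability chains; the last entry is replaced if the R-class stays the same,
and a new entry is appended if the R-class strictly drops. -/
noncomputable def estep {Q A : Type*} (step : Q → A → Q) : List Q → A → List Q
  | [], _ => []
  | (q :: rest), a =>
      if equivReach step (step q a) q then step q a :: rest
      else step q a :: q :: rest

/-- The canonical map `η` sending a chain to its last entry (chains are stored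
reversed, so this is the head); `i` is the default value. -/
def lastEntry {Q : Type*} (i : Q) : List Q → Q
  | [] => i
  | (q :: _) => q

lemma run_cons {Q A : Type*} (step : Q → A → Q) (q : Q) (a : A) (w : List A) :
    run step q (a :: w) = run step (step q a) w := rfl

lemma estep_shape {Q A : Type*} (step : Q → A → Q) :
    ∀ (w : List A) (q : Q) (rest : List Q),
      ∃ p s, run (estep step) (q :: rest) w = p :: (s ++ rest)
  | [], q, rest => ⟨q, [], rfl⟩
  | a :: w, q, rest => by
    rw [run_cons]
    simp only [estep]
    split_ifs with h
    · exact estep_shape step w (step q a) rest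
    · obtain ⟨p, s, hs⟩ := estep_shape step w (step q a) (q :: rest)
      exact ⟨p, s ++ [q], by simpa using hs⟩

lemma lastEntry_run {Q A : Type*} (step : Q → A → Q) (i : Q) :
    ∀ (w : List A) (q : Q) (rest : List Q),
      lastEntry i (run (estep step) (q :: rest) w) = run step q w
  | [], q, rest => rfl
  | a :: w, q, rest => by
    rw [run_cons, run_cons]
    simp only [estep]
    split_ifs with h
    · exact lastEntry_run step i w (step q a) rest
    · exact lastEntry_run step i w (step q a) (q :: rest)

theorem stmt10 {Q A : Type*} [Finite Q]
    (step : Q → A → Q) (i : Q)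
    (hnoret : ∀ (q : Q) (a : A), step q a ≠ i)
    (htrim : ∀ q : Q, ∃ w : List A, run step i w = q) :
    (∀ (w : List A) (a : A),
      lastEntry i (estep step (run (estep step) [i] w) a) =
        step (lastEntry i (run (estep step) [i] w)) a) ∧
    (∀ q : Q, ∃ w : List A, lastEntry i (run (estep step) [i] w) = q) ∧
    (∀ u v : List A,
      equivReach (estep step) (run (estep step) [i] u) (run (estep step) [i] v) →
      lastEntry i (run (estep step) [i] u) = lastEntry i (run (estep step) [i] v) →
      run (estep step) [i] u = run (estep step) [i] v) := by
  refine ⟨?_, ?_, ?_⟩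
  · intro w a
    obtain ⟨p, s, hs⟩ := estep_shape step w i []
    rw [hs]
    simp only [estep, lastEntry]
    split_ifs <;> rfl
  · intro q
    obtain ⟨w, hw⟩ := htrim q
    exact ⟨w, by rw [lastEntry_run step i w i []]; exact hw⟩
  · intro u v ⟨⟨w1, h1⟩, ⟨w2, h2⟩⟩ hlast
    obtain ⟨p, s, hs⟩ := estep_shape step u i []
    obtain ⟨p', t, ht⟩ := estep_shape step v i []
    simp only [List.append_nil] at hs ht
    rw [hs, ht] at h1 h2 hlast ⊢
    simp only [lastEntry] at hlast
    obtain ⟨x, s1, hx⟩ := estep_shape step w1 p s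
    obtain ⟨y, t1, hy⟩ := estep_shape step w2 p' t
    rw [hx] at h1
    rw [hy] at h2
    injection h1 with _ hts
    injection h2 with _ hst
    have hl1 := congrArg List.length hts
    have hl2 := congrArg List.length hst
    simp only [List.length_append] at hl1 hl2
    have hs1 : s1 = [] := List.eq_nil_of_length_eq_zero (by omega)
    rw [hlast, ← hts, hs1, List.nil_append]
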